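/- Let d ≥ 1 and χ be integers with χ < g(d), and let k, r be the unique integers with χ + d(d−3)/2 = kd + r and 0 ≤ r < d. Then every balanced spectrum v of type (d, χ) satisfies h⁰(v) ≤ (k+2)(k+1)/2 + max(0, k−d+r+2). -/

import Mathlib

open Finset

/-- A spectrum of type `(d, χ)`: a nonincreasing `d`-tuple of integers with
entry sum `χ - d`. -/
def IsSpectrum (d : ℕ) (χ : ℤ) (a : Fin d → ℤ) : Prop :=
  Antitone a ∧ ∑ i, a i = χ - (d : ℤ)

/-- Balanced: consecutive entries drop by at most 1. -/
def IsBalanced {d : ℕ} (a : Fin d → ℤ) : Prop :=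
  ∀ (i : Fin d) (h : (i : ℕ) + 1 < d), a i - a ⟨(i : ℕ) + 1, h⟩ ≤ 1

/-- `h⁰` of a spectrum: `Σ_{a_i ≥ 0} (a_i + 1)`. -/
def h0 {d : ℕ} (a : Fin d → ℤ) : ℤ :=
  ∑ i, if 0 ≤ a i then a i + 1 else 0

/-- Arithmetic genus of a degree `d` plane curve: `(d-1)(d-2)/2`. -/
def gd (d : ℤ) : ℤ := (d - 1) * (d - 2) / 2

private lemma gauss_int (s : ℕ) : 2 * (∑ j ∈ range s, (j : ℤ)) = s * (s - 1) := by
  induction s with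
  | zero => simp
  | succ n ih =>
    rw [Finset.sum_range_succ]
    push_cast
    push_cast at ih
    ring_nf
    ring_nf at ih
    linarith

set_option maxHeartbeats 1600000 in
/-- sharp upper bound on `h⁰` of a balanced spectrum when `χ < g(d)`. -/
theorem stmt_1 (d : ℕ) (χ k r : ℤ) (hd : 1 ≤ d) (hχ : χ < gd (d : ℤ))
    (hkr : χ + (d : ℤ) * ((d : ℤ) - 3) / 2 = k * (d : ℤ) + r)
    (hr0 : 0 ≤ r) (hrd : r < (d : ℤ))
    (a : Fin d → ℤ) (hs : IsSpectrum d χ a) (hb : IsBalanced a) :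
    h0 a ≤ (k + 2) * (k + 1) / 2 + max 0 (k - (d : ℤ) + r + 2) := by
  have hd1 : (1:ℤ) ≤ (d:ℤ) := by exact_mod_cast hd
  -- clear the divisions in the hypotheses
  have hev1 : Even ((d:ℤ) * ((d:ℤ) - 3)) := by
    have h := Int.even_mul_succ_self ((d:ℤ) - 1)
    have he : (d:ℤ) * ((d:ℤ) - 3) = ((d:ℤ)-1) * (((d:ℤ)-1)+1) - 2*(d:ℤ) := by ring
    rw [he]
    exact h.sub (even_two_mul _)
  obtain ⟨c1, hc1⟩ := hev1
  have h2kr : 2*χ + (d:ℤ)*((d:ℤ)-3) = 2*(k*(d:ℤ)) + 2*r := by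
    rw [hc1] at hkr ⊢
    have : (c1 + c1) / 2 = c1 := by omega
    rw [this] at hkr
    linarith
  have hev2 : Even (((d:ℤ)-1) * ((d:ℤ)-2)) := by
    have h := Int.even_mul_succ_self ((d:ℤ) - 2)
    have he : ((d:ℤ)-1) * ((d:ℤ)-2) = ((d:ℤ)-2) * (((d:ℤ)-2)+1) := by ring
    rw [he]; exact h
  obtain ⟨c2, hc2⟩ := hev2
  have h2χ : 2*χ < ((d:ℤ)-1)*((d:ℤ)-2) := by
    rw [gd, hc2] at hχ
    have : (c2 + c2) / 2 = c2 := by omega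
    rw [this] at hχ
    rw [hc2]; linarith
  -- k ≤ d - 3
  have hkd3 : k ≤ (d:ℤ) - 3 := by
    have h1 : k * (d:ℤ) ≤ ((d:ℤ) - 3) * (d:ℤ) := by nlinarith
    exact le_of_mul_le_mul_right h1 (by linarith)
  -- even cancellation for the goal
  have hevk : Even ((k+2)*(k+1)) := by
    have h := Int.even_mul_succ_self (k+1)
    have he : (k+2)*(k+1) = (k+1)*((k+1)+1) := by ring
    rw [he]; exact h
  obtain ⟨c3, hc3⟩ := hevk
  have hEv2 : 2 * ((k+2)*(k+1)/2) = (k+2)*(k+1) := by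
    rw [hc3]; omega
  have hBnn : 0 ≤ (k+2)*(k+1) := by
    rcases le_or_gt k (-2) with h | h
    · nlinarith
    · nlinarith
  -- transfer to ℕ-indexed function
  set b : ℕ → ℤ := fun j => if h : j < d then a ⟨j, h⟩ else 0 with hbdef
  have ha_b : ∀ i : Fin d, a i = b i.val := by
    intro i
    simp [hbdef, i.isLt]
  have hb_anti : ∀ i j : ℕ, i ≤ j → j < d → b j ≤ b i := by
    intro i j hij hj
    have hi : i < d := lt_of_le_of_lt hij hj
    simp only [hbdef, dif_pos hi, dif_pos hj]
    exact hs.1 (show (⟨i, hi⟩ : Fin d) ≤ ⟨j, hj⟩ from hij)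
  have hb_step : ∀ i n : ℕ, i + n < d → b i ≤ b (i + n) + n := by
    intro i n
    induction n with
    | zero => intro _; simp
    | succ n ih =>
      intro h
      have h' : i + n < d := by omega
      have h1 := ih h'
      have h2 : b (i + n) - b (i + n + 1) ≤ 1 := by
        have := hb ⟨i + n, h'⟩ (show i + n + 1 < d by omega)
        simpa [hbdef, dif_pos h', dif_pos (show i + n + 1 < d from by omega)] using this
      rw [show i + (n + 1) = i + n + 1 from by omega]
      push_cast
      linarith
  have hsum : ∑ j ∈ range d, b j = χ - (d:ℤ) := by
    rw [← hs.2]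
    rw [show (∑ i : Fin d, a i) = ∑ i : Fin d, b i.val from
      Finset.sum_congr rfl fun i _ => ha_b i]
    exact (Fin.sum_univ_eq_sum_range b d).symm
  have hh0 : h0 a = ∑ j ∈ range d, (if 0 ≤ b j then b j + 1 else 0) := by
    rw [h0]
    rw [show (∑ i : Fin d, if 0 ≤ a i then a i + 1 else 0)
        = ∑ i : Fin d, (fun j => if 0 ≤ b j then b j + 1 else 0) i.val from
      Finset.sum_congr rfl fun i _ => by simp only [ha_b i]]
    simpa using Fin.sum_univ_eq_sum_range (fun j => if 0 ≤ b j then b j + 1 else 0) d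
  set S : Finset ℕ := (range d).filter (fun j => 0 ≤ b j) with hSdef
  have hh0S : h0 a = ∑ j ∈ S, (b j + 1) := by
    rw [hh0, hSdef, Finset.sum_filter]
  rcases S.eq_empty_or_nonempty with hSe | hSne
  · -- empty case : h0 = 0
    rw [hh0S, hSe]
    simp only [Finset.sum_empty]
    have h1 : 0 ≤ (k+2)*(k+1)/2 := Int.ediv_nonneg hBnn (by norm_num)
    have h2 : (0:ℤ) ≤ max 0 (k - (d:ℤ) + r + 2) := le_max_left _ _
    linarith
  · set M : ℕ := S.max' hSne with hMdef
    have hM_mem : M ∈ S := S.max'_mem hSne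
    have hMd : M < d := (Finset.mem_filter.mp hM_mem).1 |> Finset.mem_range.mp
    have hM0 : 0 ≤ b M := (Finset.mem_filter.mp hM_mem).2
    have hS_eq : S = range (M + 1) := by
      ext j
      simp only [Finset.mem_range, Nat.lt_succ_iff]
      constructor
      · intro hj; exact S.le_max' j hj
      · intro hj
        rw [hSdef, Finset.mem_filter, Finset.mem_range]
        exact ⟨lt_of_le_of_lt hj hMd, le_trans hM0 (hb_anti j M hj hMd)⟩
    have hh0M : h0 a = (∑ j ∈ range (M+1), b j) + ((M:ℤ) + 1) := by
      rw [hh0S, hS_eq, Finset.sum_add_distrib, Finset.sum_const, Finset.card_range]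
      push_cast
      ring
    have hsplit : (∑ j ∈ range (M+1), b j) + (∑ j ∈ Ico (M+1) d, b j)
        = χ - (d:ℤ) := by
      rw [Finset.sum_range_add_sum_Ico _ (show M + 1 ≤ d from hMd)]
      exact hsum
    rcases le_or_gt (k + 1) ((M:ℤ)) with hMk | hMk
    · -- many nonnegative entries: use the tail lower bound
      have htail : ∀ j ∈ Ico (M+1) d, (M:ℤ) - (j:ℤ) ≤ b j := by
        intro j hj
        rw [Finset.mem_Ico] at hj
        have hstep := hb_step M (j - M) (by omega)
        rw [show M + (j - M) = j from by omega] at hstep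
        have hcast : ((j - M : ℕ) : ℤ) = (j:ℤ) - (M:ℤ) := by
          have : M ≤ j := by omega
          push_cast [this]
          ring
        rw [hcast] at hstep
        linarith
      have htailsum : (∑ j ∈ Ico (M+1) d, ((M:ℤ) - (j:ℤ)))
          ≤ ∑ j ∈ Ico (M+1) d, b j := Finset.sum_le_sum htail
      -- evaluate the arithmetic sum
      have heval : 2 * (∑ j ∈ Ico (M+1) d, ((M:ℤ) - (j:ℤ)))
          = -(((d:ℤ) - M - 1) * ((d:ℤ) - M)) := by
        rw [Finset.sum_Ico_eq_sum_range]
        have hg := gauss_int (d - (M+1))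
        have hcast : ((d - (M+1) : ℕ) : ℤ) = (d:ℤ) - M - 1 := by
          have : M + 1 ≤ d := hMd
          push_cast [this]
          ring
        have hrw : (∑ j ∈ range (d - (M+1)), ((M:ℤ) - ((M + 1 + j : ℕ) : ℤ)))
            = ∑ j ∈ range (d - (M+1)), (-1 - (j:ℤ)) := by
          apply Finset.sum_congr rfl
          intro j _
          push_cast
          ring
        rw [hrw, Finset.sum_sub_distrib, Finset.sum_const, Finset.card_range,
          nsmul_eq_mul, hcast]
        rw [hcast] at hg
        linear_combination -hg
      have key : 2 * h0 a ≤ (k+2)*(k+1) + 2*(k - (d:ℤ) + r + 2) := by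
        have h1 : 2 * h0 a ≤ 2*((M:ℤ)+1) + 2*(χ - (d:ℤ))
            + (((d:ℤ) - M - 1) * ((d:ℤ) - M)) := by
          rw [hh0M]
          linarith
        have hMle : (M:ℤ) ≤ (d:ℤ) - 1 := by
          have : (M:ℤ) < (d:ℤ) := by exact_mod_cast hMd
          linarith
        nlinarith [mul_nonneg (by linarith : (0:ℤ) ≤ (M:ℤ) - k - 1)
          (by linarith : (0:ℤ) ≤ 2*(d:ℤ) - (M:ℤ) - k - 4)]
      have hmax : k - (d:ℤ) + r + 2 ≤ max 0 (k - (d:ℤ) + r + 2) := le_max_right _ _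
      linarith
    · -- few nonnegative entries : use the head upper bound
      have hMkd : M + 1 < d := by
        have : (M:ℤ) ≤ k := by linarith
        have : (M:ℤ) + 1 < (d:ℤ) := by linarith
        exact_mod_cast this
      have hM1neg : b (M+1) ≤ -1 := by
        have hnot : M + 1 ∉ S := by
          intro hmem
          have := S.le_max' (M+1) hmem
          omega
        rw [hSdef, Finset.mem_filter, Finset.mem_range] at hnot
        push_neg at hnot
        have := hnot hMkd
        linarith
      have hbM : b M = 0 := by
        have := hb_step M 1 (by omega)
        have h1 : b M ≤ b (M+1) + 1 := by
          simpa using this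
        linarith
      have hhead : ∀ j ∈ range (M+1), b j + 1 ≤ (M:ℤ) - (j:ℤ) + 1 := by
        intro j hj
        rw [Finset.mem_range, Nat.lt_succ_iff] at hj
        have hstep := hb_step j (M - j) (by omega)
        rw [show j + (M - j) = M from by omega] at hstep
        have hcast : ((M - j : ℕ) : ℤ) = (M:ℤ) - (j:ℤ) := by
          push_cast [hj]
          ring
        rw [hcast, hbM] at hstep
        linarith
      have hheadsum : h0 a ≤ ∑ j ∈ range (M+1), ((M:ℤ) - (j:ℤ) + 1) := by
        rw [hh0S, hS_eq]
        exact Finset.sum_le_sum hhead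
      have heval : 2 * (∑ j ∈ range (M+1), ((M:ℤ) - (j:ℤ) + 1))
          = ((M:ℤ) + 1) * ((M:ℤ) + 2) := by
        have hg := gauss_int (M+1)
        have hrw : (∑ j ∈ range (M+1), ((M:ℤ) - (j:ℤ) + 1))
            = (∑ j ∈ range (M+1), ((M:ℤ) + 1)) - ∑ j ∈ range (M+1), (j:ℤ) := by
          rw [← Finset.sum_sub_distrib]
          apply Finset.sum_congr rfl
          intro j _
          ring
        rw [hrw, Finset.sum_const, Finset.card_range, nsmul_eq_mul]
        push_cast
        push_cast at hg
        linear_combination -hg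
      have key : 2 * h0 a ≤ (k+2)*(k+1) := by
        have h1 : 2 * h0 a ≤ ((M:ℤ) + 1) * ((M:ℤ) + 2) := by
          rw [← heval]; linarith
        have hMnn : (0:ℤ) ≤ (M:ℤ) := Int.ofNat_nonneg M
        have hMk' : (M:ℤ) ≤ k := by linarith
        nlinarith [mul_nonneg (by linarith : (0:ℤ) ≤ k - (M:ℤ))
          (by linarith : (0:ℤ) ≤ k + (M:ℤ) + 3)]
      have hmax : (0:ℤ) ≤ max 0 (k - (d:ℤ) + r + 2) := le_max_left _ _
      linarith
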